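/- Let ρ > 0 and γ > 0. For every integer N ≥ 0: if N is even, then ∫_{−∞}^{∞} ln(1 + ρ·e^{z−2γ})·e^{−z²/(8γ)}·dz/√(8πγ) ≤ 2√π·Σ_{n=0}^{N} (−1)ⁿ·c_n(ρ)·(8γ)^{−(n+1/2)}·e^{−γ/2}, and if N is odd, then ∫_{−∞}^{∞} ln(1 + ρ·e^{z−2γ})·e^{−z²/(8γ)}·dz/√(8πγ) ≥ 2√π·Σ_{n=0}^{N} (−1)ⁿ·c_n(ρ)·(8γ)^{−(n+1/2)}·e^{−γ/2}. That is, consecutive partial sums of the series 2√π·Σ_{n≥0} (−1)ⁿ·c_n(ρ)·(8γ)^{−(n+1/2)}·e^{−γ/2} are alternately upper and lower bounds to the integral. -/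

import Mathlib

open MeasureTheory Real Set Finset

/-- `c_n(ρ) = (1/(2π·n!)) ∫ ln(1+ρ·e^z)·z^{2n}·e^{−z/2} dz`. -/
noncomputable def cCoef (n : ℕ) (ρ : ℝ) : ℝ :=
  (1 / (2 * Real.pi * n.factorial)) *
    ∫ z : ℝ, Real.log (1 + ρ * Real.exp z) * z ^ (2 * n) * Real.exp (-z / 2)


lemma integrable_comp_abs' {f : ℝ → ℝ} (hf : IntegrableOn (fun x => f |x|) (Ioi 0)) :
    Integrable fun x : ℝ => f |x| := by
  have int_Iic : IntegrableOn (fun x ↦ f |x|) (Iic 0) := by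
    rw [← Measure.map_neg_eq_self (volume : Measure ℝ)]
    have m : MeasurableEmbedding fun x : ℝ => -x := (Homeomorph.neg ℝ).measurableEmbedding
    rw [m.integrableOn_map_iff]
    simp_rw [Function.comp_def, abs_neg, neg_preimage, neg_Iic, neg_zero]
    exact Iff.mpr integrableOn_Ici_iff_integrableOn_Ioi hf
  rw [← integrableOn_univ, ← Iic_union_Ioi (a := (0:ℝ))]
  exact int_Iic.union hf

lemma integrable_exp_negabs : Integrable fun x : ℝ => Real.exp (-(|x| / 4)) := by
  have := integrable_comp_abs' (f := fun t => Real.exp (-(t / 4))) ?_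
  · exact this
  · refine (exp_neg_integrableOn_Ioi 0 (by norm_num : (0:ℝ) < 1/4)).congr_fun ?_ measurableSet_Ioi
    intro x hx
    simp only []
    rw [abs_of_pos (show (0:ℝ) < x from hx)]
    ring_nf


lemma pow_le_exp_aux (k : ℕ) {t : ℝ} (ht : 0 ≤ t) :
    t ^ k ≤ (k.factorial : ℝ) * 4 ^ k * Real.exp (t / 4) := by
  have h4 : (0:ℝ) ≤ t / 4 := by positivity
  have hsum := Real.sum_le_exp_of_nonneg h4 (k + 1)
  have hterm : (t / 4) ^ k / (k.factorial : ℝ) ≤ Real.exp (t / 4) := by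
    refine le_trans ?_ hsum
    exact Finset.single_le_sum (f := fun i => (t/4) ^ i / (i.factorial : ℝ))
      (fun i _ => by positivity) (Finset.self_mem_range_succ k)
  have hk : (0:ℝ) < (k.factorial : ℝ) := by positivity
  have hle := (div_le_iff₀ hk).mp hterm
  calc t ^ k = ((t/4) ^ k) * 4 ^ k := by rw [div_pow]; field_simp
    _ ≤ (Real.exp (t/4) * (k.factorial : ℝ)) * 4 ^ k := by gcongr
    _ = (k.factorial : ℝ) * 4 ^ k * Real.exp (t / 4) := by ring

lemma log_term_nonneg {ρ : ℝ} (hρ : 0 < ρ) (w : ℝ) : 0 ≤ Real.log (1 + ρ * Real.exp w) :=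
  Real.log_nonneg (by nlinarith [Real.exp_pos w])

lemma log_term_le {ρ : ℝ} (hρ : 0 < ρ) (w : ℝ) :
    Real.log (1 + ρ * Real.exp w) ≤ Real.log (1 + ρ) + |w| := by
  have h2 : 1 + ρ * Real.exp w ≤ (1 + ρ) * Real.exp |w| := by
    have e1 : Real.exp w ≤ Real.exp |w| := Real.exp_le_exp.mpr (le_abs_self w)
    have e2 : (1:ℝ) ≤ Real.exp |w| := Real.one_le_exp (abs_nonneg w)
    nlinarith [Real.exp_pos w]
  calc Real.log (1 + ρ * Real.exp w) ≤ Real.log ((1 + ρ) * Real.exp |w|) :=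
        Real.log_le_log (by nlinarith [Real.exp_pos w]) h2
    _ = Real.log (1 + ρ) + |w| := by
        rw [Real.log_mul (by positivity) (Real.exp_ne_zero _), Real.log_exp]

lemma log_term_le' {ρ : ℝ} (hρ : 0 < ρ) (w : ℝ) :
    Real.log (1 + ρ * Real.exp w) ≤ ρ * Real.exp w := by
  have := Real.log_le_sub_one_of_pos (show (0:ℝ) < 1 + ρ * Real.exp w by positivity)
  linarith

lemma main_bound {ρ : ℝ} (hρ : 0 < ρ) (k : ℕ) (w : ℝ) :
    Real.log (1 + ρ * Real.exp w) * |w| ^ k * Real.exp (-w / 2) ≤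
      ((ρ + Real.log (1 + ρ)) * k.factorial * 4 ^ k
        + (k+1).factorial * 4 ^ (k+1)) * Real.exp (-(|w| / 4)) := by
  have hL := log_term_nonneg hρ w
  have key : Real.log (1 + ρ * Real.exp w) * |w| ^ k * Real.exp (-w / 2) ≤
      (ρ + Real.log (1 + ρ) + |w|) * |w| ^ k * Real.exp (-(|w| / 2)) := by
    rcases le_or_gt 0 w with hw | hw
    · have : Real.exp (-w / 2) = Real.exp (-(|w| / 2)) := by rw [abs_of_nonneg hw]; ring_nf
      rw [this]
      have := log_term_le hρ w
      have hLρ : 0 ≤ Real.log (1 + ρ) := Real.log_nonneg (by linarith)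
      gcongr
      linarith
    · have h1 : Real.log (1 + ρ * Real.exp w) * Real.exp (-w / 2) ≤ ρ * Real.exp (-(|w|/2)) := by
        have := log_term_le' hρ w
        have h2 : Real.exp w * Real.exp (-w / 2) = Real.exp (-(|w|/2)) := by
          rw [← Real.exp_add, abs_of_neg hw]; ring_nf
        calc Real.log (1 + ρ * Real.exp w) * Real.exp (-w / 2)
            ≤ (ρ * Real.exp w) * Real.exp (-w / 2) := by gcongr
          _ = ρ * Real.exp (-(|w|/2)) := by rw [mul_assoc]; rw [h2]
      have hLρ : 0 ≤ Real.log (1 + ρ) := Real.log_nonneg (by linarith)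
      calc Real.log (1 + ρ * Real.exp w) * |w| ^ k * Real.exp (-w / 2)
          = (Real.log (1 + ρ * Real.exp w) * Real.exp (-w / 2)) * |w| ^ k := by ring
        _ ≤ (ρ * Real.exp (-(|w|/2))) * |w| ^ k := mul_le_mul_of_nonneg_right h1 (pow_nonneg (abs_nonneg w) k)
        _ ≤ (ρ + Real.log (1 + ρ) + |w|) * |w| ^ k * Real.exp (-(|w| / 2)) := by
            have he : (0:ℝ) < Real.exp (-(|w|/2)) := Real.exp_pos _
            nlinarith [mul_nonneg (add_nonneg hLρ (abs_nonneg w))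
              (mul_nonneg (pow_nonneg (abs_nonneg w) k) he.le)]
  refine key.trans ?_
  have hLρ : 0 ≤ Real.log (1 + ρ) := Real.log_nonneg (by linarith)
  have hsplit : (ρ + Real.log (1 + ρ) + |w|) * |w| ^ k * Real.exp (-(|w| / 2))
      = (ρ + Real.log (1 + ρ)) * (|w| ^ k * Real.exp (-(|w| / 2)))
        + |w| ^ (k+1) * Real.exp (-(|w| / 2)) := by ring
  rw [hsplit]
  have habs : ∀ m : ℕ, |w| ^ m * Real.exp (-(|w| / 2)) ≤
      (m.factorial : ℝ) * 4 ^ m * Real.exp (-(|w| / 4)) := by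
    intro m
    have h := pow_le_exp_aux m (abs_nonneg w)
    have he : Real.exp (|w| / 4) * Real.exp (-(|w| / 2)) = Real.exp (-(|w| / 4)) := by
      rw [← Real.exp_add]; ring_nf
    calc |w| ^ m * Real.exp (-(|w| / 2))
        ≤ ((m.factorial : ℝ) * 4 ^ m * Real.exp (|w| / 4)) * Real.exp (-(|w| / 2)) :=
          mul_le_mul_of_nonneg_right h (Real.exp_pos _).le
      _ = (m.factorial : ℝ) * 4 ^ m * Real.exp (-(|w| / 4)) := by
          rw [mul_assoc]; rw [he]
  have hC : 0 ≤ ρ + Real.log (1 + ρ) := add_nonneg hρ.le hLρ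
  calc (ρ + Real.log (1 + ρ)) * (|w| ^ k * Real.exp (-(|w| / 2)))
        + |w| ^ (k+1) * Real.exp (-(|w| / 2))
      ≤ (ρ + Real.log (1 + ρ)) * ((k.factorial : ℝ) * 4 ^ k * Real.exp (-(|w| / 4)))
        + ((k+1).factorial : ℝ) * 4 ^ (k+1) * Real.exp (-(|w| / 4)) :=
        add_le_add (mul_le_mul_of_nonneg_left (habs k) hC) (habs (k+1))
    _ = ((ρ + Real.log (1 + ρ)) * k.factorial * 4 ^ k
        + (k+1).factorial * 4 ^ (k+1)) * Real.exp (-(|w| / 4)) := by push_cast; ring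



lemma cont_main {ρ : ℝ} (hρ : 0 < ρ) (k : ℕ) :
    Continuous (fun w : ℝ => Real.log (1 + ρ * Real.exp w) * w ^ k * Real.exp (-w / 2)) := by
  have h1 : Continuous fun w : ℝ => Real.log (1 + ρ * Real.exp w) :=
    (continuous_const.add (continuous_const.mul Real.continuous_exp)).log
      (fun w => by show (1:ℝ) + ρ * Real.exp w ≠ 0; nlinarith [Real.exp_pos w])
  exact ((h1.mul (continuous_pow k)).mul ((continuous_id.neg.div_const 2).rexp))

lemma integrable_main {ρ : ℝ} (hρ : 0 < ρ) (k : ℕ) :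
    Integrable (fun w : ℝ => Real.log (1 + ρ * Real.exp w) * w ^ k * Real.exp (-w / 2)) := by
  set C : ℝ := (ρ + Real.log (1 + ρ)) * k.factorial * 4 ^ k + (k+1).factorial * 4 ^ (k+1) with hC
  refine Integrable.mono (integrable_exp_negabs.const_mul C)
    ((cont_main hρ k).aestronglyMeasurable) (ae_of_all _ fun w => ?_)
  have hb := main_bound hρ k w
  have hnn := log_term_nonneg hρ w
  rw [Real.norm_eq_abs, Real.norm_eq_abs]
  rw [abs_mul, abs_mul, abs_of_nonneg hnn, abs_of_nonneg (Real.exp_pos _).le, abs_pow]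
  exact hb.trans (le_abs_self _)

lemma integrable_gauss {ρ γ : ℝ} (hρ : 0 < ρ) (hγ : 0 < γ) :
    Integrable (fun w : ℝ =>
      Real.log (1 + ρ * Real.exp w) * Real.exp (-w ^ 2 / (8 * γ)) * Real.exp (-w / 2)) := by
  have hcont : Continuous (fun w : ℝ =>
      Real.log (1 + ρ * Real.exp w) * Real.exp (-w ^ 2 / (8 * γ)) * Real.exp (-w / 2)) := by
    have h1 : Continuous fun w : ℝ => Real.log (1 + ρ * Real.exp w) :=
      (continuous_const.add (continuous_const.mul Real.continuous_exp)).log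
        (fun w => by show (1:ℝ) + ρ * Real.exp w ≠ 0; nlinarith [Real.exp_pos w])
    fun_prop
  refine Integrable.mono (g := fun w : ℝ =>
      Real.log (1 + ρ * Real.exp w) * w ^ 0 * Real.exp (-w / 2))
    (integrable_main hρ 0) hcont.aestronglyMeasurable (ae_of_all _ fun w => ?_)
  have hnn := log_term_nonneg hρ w
  rw [Real.norm_eq_abs, Real.norm_eq_abs]
  simp only [pow_zero, mul_one]
  rw [abs_mul, abs_mul, abs_of_nonneg hnn, abs_of_nonneg (Real.exp_pos _).le,
    abs_of_nonneg (Real.exp_pos _).le, abs_mul, abs_of_nonneg hnn,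
    abs_of_nonneg (Real.exp_pos _).le]
  have h1 : Real.exp (-w ^ 2 / (8 * γ)) ≤ 1 := by
    rw [Real.exp_le_one_iff, neg_div]
    exact neg_nonpos.mpr (by positivity)
  nlinarith [Real.exp_pos (-w/2), mul_nonneg hnn (Real.exp_pos (-w/2)).le]

noncomputable def expS (N : ℕ) (x : ℝ) : ℝ :=
  ∑ n ∈ Finset.range (N + 1), (-1 : ℝ) ^ n * x ^ n / n.factorial

lemma expS_zero (N : ℕ) : expS N 0 = 1 := by
  rw [expS, Finset.sum_eq_single 0]
  · simp
  · intro n _ hn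
    rw [zero_pow hn]; ring
  · simp

lemma hasDerivAt_expS (N : ℕ) (x : ℝ) : HasDerivAt (expS (N + 1)) (-(expS N x)) x := by
  have h : ∀ n ∈ Finset.range (N + 2),
      HasDerivAt (fun y : ℝ => (-1 : ℝ) ^ n * y ^ n / n.factorial)
        ((-1 : ℝ) ^ n * (n * x ^ (n - 1)) / n.factorial) x := by
    intro n _
    simpa [mul_div_assoc] using ((hasDerivAt_pow n x).const_mul ((-1 : ℝ) ^ n)).div_const
      (n.factorial : ℝ)
  have hsum := HasDerivAt.fun_sum h
  refine hsum.congr_deriv ?_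
  symm
  rw [Finset.sum_range_succ']
  simp only [pow_zero, Nat.cast_zero, zero_mul, mul_zero, Nat.factorial_zero, Nat.cast_one,
    zero_div, add_zero]
  rw [expS, ← Finset.sum_neg_distrib]
  refine Finset.sum_congr rfl fun n _ => ?_
  have hfac : ((n + 1).factorial : ℝ) = (n + 1) * n.factorial := by
    rw [Nat.factorial_succ]; push_cast; ring
  rw [pow_succ]
  field_simp [hfac]
  rw [Nat.add_sub_cancel, hfac]; push_cast; ring



lemma expS_alt (N : ℕ) : ∀ x : ℝ, 0 ≤ x →
    0 ≤ (-1 : ℝ) ^ N * (expS N x - Real.exp (-x)) := by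
  induction N with
  | zero =>
    intro x hx
    simp only [pow_zero, one_mul]
    have h1 : expS 0 x = 1 := by simp [expS]
    rw [h1]
    have := Real.exp_le_one_iff.mpr (neg_nonpos.mpr hx)
    linarith
  | succ N ih =>
    intro x hx
    set D : ℝ → ℝ := fun y => (-1 : ℝ) ^ (N + 1) * (expS (N + 1) y - Real.exp (-y)) with hD
    have hderiv : ∀ y : ℝ, HasDerivAt D ((-1 : ℝ) ^ N * (expS N y - Real.exp (-y))) y := by
      intro y
      have h1 : HasDerivAt (fun y : ℝ => Real.exp (-y)) (-Real.exp (-y)) y := by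
        simpa using (hasDerivAt_neg y).exp
      have h2 := ((hasDerivAt_expS N y).sub h1).const_mul ((-1 : ℝ) ^ (N + 1))
      refine h2.congr_deriv ?_
      rw [pow_succ]
      ring
    have hmono : MonotoneOn D (Ici (0 : ℝ)) := by
      refine monotoneOn_of_deriv_nonneg (convex_Ici 0) ?_ ?_ ?_
      · exact (Differentiable.continuous fun y => (hderiv y).differentiableAt).continuousOn
      · intro y _
        exact (hderiv y).differentiableAt.differentiableWithinAt
      · intro y hy
        rw [(hderiv y).deriv]
        exact ih y (le_of_lt (by simpa using hy))
    have h0 : D 0 = 0 := by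
      rw [hD]
      simp [expS_zero]
    have := hmono (self_mem_Ici) (mem_Ici.mpr hx) hx
    rw [h0] at this
    exact this



lemma sum_eq_expS {ρ γ : ℝ} (hγ : 0 < γ) (N : ℕ) (w : ℝ) :
    ∑ n ∈ Finset.range (N + 1), ((-1 : ℝ) ^ n / ((8 * γ) ^ n * n.factorial)) *
        (Real.log (1 + ρ * Real.exp w) * w ^ (2 * n) * Real.exp (-w / 2))
      = (Real.log (1 + ρ * Real.exp w) * Real.exp (-w / 2)) * expS N (w ^ 2 / (8 * γ)) := by
  rw [expS, Finset.mul_sum]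
  refine Finset.sum_congr rfl fun n _ => ?_
  have hx : (w ^ 2 / (8 * γ)) ^ n = w ^ (2 * n) / (8 * γ) ^ n := by
    rw [div_pow, ← pow_mul]
  rw [hx]
  have h8 : ((8 : ℝ) * γ) ^ n ≠ 0 := pow_ne_zero _ (by positivity)
  have hf : ((n.factorial : ℝ)) ≠ 0 := by positivity
  field_simp

lemma core_ineq {ρ γ : ℝ} (hρ : 0 < ρ) (hγ : 0 < γ) (N : ℕ) :
    ((-1 : ℝ) ^ N = 1 →
      (∫ w : ℝ, Real.log (1 + ρ * Real.exp w) * Real.exp (-w ^ 2 / (8 * γ)) * Real.exp (-w / 2))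
        ≤ ∑ n ∈ Finset.range (N + 1), ((-1 : ℝ) ^ n / ((8 * γ) ^ n * n.factorial)) *
            ∫ w : ℝ, Real.log (1 + ρ * Real.exp w) * w ^ (2 * n) * Real.exp (-w / 2))
    ∧ ((-1 : ℝ) ^ N = -1 →
      ∑ n ∈ Finset.range (N + 1), ((-1 : ℝ) ^ n / ((8 * γ) ^ n * n.factorial)) *
            (∫ w : ℝ, Real.log (1 + ρ * Real.exp w) * w ^ (2 * n) * Real.exp (-w / 2))
        ≤ ∫ w : ℝ, Real.log (1 + ρ * Real.exp w) * Real.exp (-w ^ 2 / (8 * γ))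
            * Real.exp (-w / 2)) := by
  have hint_sum : Integrable (fun w : ℝ => ∑ n ∈ Finset.range (N + 1),
      ((-1 : ℝ) ^ n / ((8 * γ) ^ n * n.factorial)) *
        (Real.log (1 + ρ * Real.exp w) * w ^ (2 * n) * Real.exp (-w / 2))) :=
    integrable_finset_sum _ fun n _ => (integrable_main hρ (2 * n)).const_mul _
  have hsum_int : ∫ w : ℝ, ∑ n ∈ Finset.range (N + 1),
      ((-1 : ℝ) ^ n / ((8 * γ) ^ n * n.factorial)) *
        (Real.log (1 + ρ * Real.exp w) * w ^ (2 * n) * Real.exp (-w / 2))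
      = ∑ n ∈ Finset.range (N + 1), ((-1 : ℝ) ^ n / ((8 * γ) ^ n * n.factorial)) *
          ∫ w : ℝ, Real.log (1 + ρ * Real.exp w) * w ^ (2 * n) * Real.exp (-w / 2) := by
    rw [integral_finset_sum _ fun n _ => (integrable_main hρ (2 * n)).const_mul _]
    exact Finset.sum_congr rfl fun n _ => integral_const_mul _ _
  have hgauss_eq : ∀ w : ℝ, Real.log (1 + ρ * Real.exp w) * Real.exp (-w ^ 2 / (8 * γ))
      * Real.exp (-w / 2)
      = (Real.log (1 + ρ * Real.exp w) * Real.exp (-w / 2))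
          * Real.exp (-(w ^ 2 / (8 * γ))) := by
    intro w
    rw [neg_div]
    ring
  constructor
  · intro hN
    have hpt : ∀ w : ℝ, Real.log (1 + ρ * Real.exp w) * Real.exp (-w ^ 2 / (8 * γ))
        * Real.exp (-w / 2) ≤ ∑ n ∈ Finset.range (N + 1),
          ((-1 : ℝ) ^ n / ((8 * γ) ^ n * n.factorial)) *
            (Real.log (1 + ρ * Real.exp w) * w ^ (2 * n) * Real.exp (-w / 2)) := by
      intro w
      rw [sum_eq_expS hγ, hgauss_eq]
      have hkey := expS_alt N (w ^ 2 / (8 * γ)) (by positivity)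
      rw [hN, one_mul] at hkey
      have hnn : 0 ≤ Real.log (1 + ρ * Real.exp w) * Real.exp (-w / 2) :=
        mul_nonneg (log_term_nonneg hρ w) (Real.exp_pos _).le
      nlinarith
    rw [← hsum_int]
    exact integral_mono (integrable_gauss hρ hγ) hint_sum hpt
  · intro hN
    have hpt : ∀ w : ℝ, (∑ n ∈ Finset.range (N + 1),
          ((-1 : ℝ) ^ n / ((8 * γ) ^ n * n.factorial)) *
            (Real.log (1 + ρ * Real.exp w) * w ^ (2 * n) * Real.exp (-w / 2)))
        ≤ Real.log (1 + ρ * Real.exp w) * Real.exp (-w ^ 2 / (8 * γ)) * Real.exp (-w / 2) := by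
      intro w
      rw [sum_eq_expS hγ, hgauss_eq]
      have hkey := expS_alt N (w ^ 2 / (8 * γ)) (by positivity)
      rw [hN] at hkey
      have hnn : 0 ≤ Real.log (1 + ρ * Real.exp w) * Real.exp (-w / 2) :=
        mul_nonneg (log_term_nonneg hρ w) (Real.exp_pos _).le
      nlinarith
    rw [← hsum_int]
    exact integral_mono hint_sum (integrable_gauss hρ hγ) hpt



-- Step 1: substitution
lemma lhs_transform {ρ γ : ℝ} (hγ : 0 < γ) :
    (∫ z : ℝ, Real.log (1 + ρ * Real.exp (z - 2 * γ))
        * Real.exp (-z ^ 2 / (8 * γ)) / Real.sqrt (8 * Real.pi * γ))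
      = (∫ w : ℝ, Real.log (1 + ρ * Real.exp w) * Real.exp (-w ^ 2 / (8 * γ))
          * Real.exp (-w / 2)) * Real.exp (-γ / 2) / Real.sqrt (8 * Real.pi * γ) := by
  rw [integral_div]
  congr 1
  rw [← integral_mul_const]
  rw [← integral_add_right_eq_self (fun z : ℝ => Real.log (1 + ρ * Real.exp (z - 2 * γ))
        * Real.exp (-z ^ 2 / (8 * γ))) (2 * γ)]
  refine integral_congr_ae (ae_of_all _ fun w => ?_)
  simp only [add_sub_cancel_right]
  have hexp : Real.exp (-(w + 2 * γ) ^ 2 / (8 * γ))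
      = Real.exp (-w ^ 2 / (8 * γ)) * Real.exp (-w / 2) * Real.exp (-γ / 2) := by
    rw [← Real.exp_add, ← Real.exp_add]
    congr 1
    field_simp
    ring
  rw [hexp]
  ring

-- Step 2: RHS algebra
lemma rhs_eq {ρ γ : ℝ} (hγ : 0 < γ) (N : ℕ) :
    2 * Real.sqrt Real.pi * ∑ n ∈ Finset.range (N + 1),
        (-1 : ℝ) ^ n * cCoef n ρ / (8 * γ) ^ ((n : ℝ) + 1 / 2) * Real.exp (-γ / 2)
      = (∑ n ∈ Finset.range (N + 1), ((-1 : ℝ) ^ n / ((8 * γ) ^ n * n.factorial)) *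
          ∫ w : ℝ, Real.log (1 + ρ * Real.exp w) * w ^ (2 * n) * Real.exp (-w / 2))
        * Real.exp (-γ / 2) / Real.sqrt (8 * Real.pi * γ) := by
  rw [Finset.mul_sum, Finset.sum_mul, Finset.sum_div]
  refine Finset.sum_congr rfl fun n _ => ?_
  have h8γ : (0 : ℝ) < 8 * γ := by positivity
  have hrpow : (8 * γ) ^ ((n : ℝ) + 1 / 2) = (8 * γ) ^ n * Real.sqrt (8 * γ) := by
    rw [Real.rpow_add h8γ, Real.rpow_natCast, Real.sqrt_eq_rpow]
  have hsqrt : Real.sqrt (8 * Real.pi * γ) = Real.sqrt Real.pi * Real.sqrt (8 * γ) := by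
    rw [← Real.sqrt_mul Real.pi_pos.le]
    congr 1
    ring
  rw [hrpow, hsqrt, cCoef]
  have hπ : Real.sqrt Real.pi * Real.sqrt Real.pi = Real.pi :=
    Real.mul_self_sqrt Real.pi_pos.le
  have h1 : Real.sqrt Real.pi ≠ 0 := ne_of_gt (Real.sqrt_pos.mpr Real.pi_pos)
  have h2 : Real.sqrt (8 * γ) ≠ 0 := ne_of_gt (Real.sqrt_pos.mpr h8γ)
  have h3 : ((8 : ℝ) * γ) ^ n ≠ 0 := pow_ne_zero _ (ne_of_gt h8γ)
  have h4 : ((n.factorial : ℝ)) ≠ 0 := by positivity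
  field_simp
  set s := Real.sqrt Real.pi with hs
  rw [← hπ]
  ring

/-- Consecutive partial sums of `2√π·Σₙ (−1)ⁿ·c_n(ρ)·(8γ)^{−(n+1/2)}·e^{−γ/2}` are
alternately upper (even `N`) and lower (odd `N`) bounds to
`∫ ln(1+ρ·e^{z−2γ})·e^{−z²/(8γ)} dz/√(8πγ)`. -/
theorem stmt2 (ρ γ : ℝ) (hρ : 0 < ρ) (hγ : 0 < γ) (N : ℕ) :
    (Even N →
      (∫ z : ℝ, Real.log (1 + ρ * Real.exp (z - 2 * γ))
          * Real.exp (-z ^ 2 / (8 * γ)) / Real.sqrt (8 * Real.pi * γ))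
        ≤ 2 * Real.sqrt Real.pi * ∑ n ∈ Finset.range (N + 1),
            (-1 : ℝ) ^ n * cCoef n ρ / (8 * γ) ^ ((n : ℝ) + 1 / 2) * Real.exp (-γ / 2))
    ∧ (Odd N →
      2 * Real.sqrt Real.pi * ∑ n ∈ Finset.range (N + 1),
            (-1 : ℝ) ^ n * cCoef n ρ / (8 * γ) ^ ((n : ℝ) + 1 / 2) * Real.exp (-γ / 2)
        ≤ ∫ z : ℝ, Real.log (1 + ρ * Real.exp (z - 2 * γ))
            * Real.exp (-z ^ 2 / (8 * γ)) / Real.sqrt (8 * Real.pi * γ)) := by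
  have hcore := core_ineq hρ hγ N
  have hsqrt_pos : 0 < Real.sqrt (8 * Real.pi * γ) :=
    Real.sqrt_pos.mpr (by positivity)
  constructor
  · intro hN
    rw [lhs_transform hγ, rhs_eq (ρ := ρ) hγ N]
    have h := hcore.1 hN.neg_one_pow
    have h2 := mul_le_mul_of_nonneg_right h (Real.exp_pos (-γ / 2)).le
    exact (div_le_div_iff_of_pos_right hsqrt_pos).mpr h2
  · intro hN
    rw [lhs_transform hγ, rhs_eq (ρ := ρ) hγ N]
    have h := hcore.2 hN.neg_one_pow
    have h2 := mul_le_mul_of_nonneg_right h (Real.exp_pos (-γ / 2)).le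
    exact (div_le_div_iff_of_pos_right hsqrt_pos).mpr h2
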